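/- Let p be an odd prime. Then in ZMod p^3, (-1)^((p-1)/2) · C(p-1, (p-1)/2) = 1 - 2p·S_0 + 4p^2·S_00, where C(p-1, (p-1)/2) is the central binomial coefficient, S_0 is the sum of inverses of even integers i with 0 < i < p, and S_00 is the sum of 1/(ij) over pairs 0 < i < j < p with both i and j even. -/

import Mathlib

open Finset

lemma cbmp_inv_mul_split {n : ℕ} {a b : ZMod n} (ha : IsUnit a) (hb : IsUnit b) :
    (a * b)⁻¹ = a⁻¹ * b⁻¹ := by
  have hab : IsUnit (a * b) := ha.mul hb
  have h1 : (a * b) * (a⁻¹ * b⁻¹) = 1 := by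
    rw [mul_mul_mul_comm, ZMod.mul_inv_of_unit a ha, ZMod.mul_inv_of_unit b hb, one_mul]
  calc (a * b)⁻¹ = (a * b)⁻¹ * ((a * b) * (a⁻¹ * b⁻¹)) := by rw [h1, mul_one]
    _ = ((a * b)⁻¹ * (a * b)) * (a⁻¹ * b⁻¹) := by ring
    _ = a⁻¹ * b⁻¹ := by rw [ZMod.inv_mul_of_unit _ hab, one_mul]

section
variable {R : Type*} [CommRing R]

lemma cbmp_pair_sum (s : Finset ℕ) (g : ℕ → R) (h : R) (h2 : 2 * h = 1) :
    ∑ i ∈ s, ∑ j ∈ s.filter (fun j => i < j), g i * g j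
      = h * ((∑ i ∈ s, g i) ^ 2 - ∑ i ∈ s, g i ^ 2) := by
  set E := ∑ i ∈ s, ∑ j ∈ s.filter (fun j => i < j), g i * g j with hE
  have key : 2 * E = (∑ i ∈ s, g i) ^ 2 - ∑ i ∈ s, g i ^ 2 := by
    have e1 : E = ∑ i ∈ s, ∑ j ∈ s, if i < j then g i * g j else 0 := by
      simp [hE, Finset.sum_filter]
    have e2 : E = ∑ i ∈ s, ∑ j ∈ s, if j < i then g i * g j else 0 := by
      rw [e1, Finset.sum_comm]
      refine Finset.sum_congr rfl fun i _ => Finset.sum_congr rfl fun j _ => ?_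
      by_cases h : j < i <;> simp [h, mul_comm]
    calc 2 * E = (∑ i ∈ s, ∑ j ∈ s, if i < j then g i * g j else 0)
          + ∑ i ∈ s, ∑ j ∈ s, if j < i then g i * g j else 0 := by
            rw [← e1, ← e2]; ring
      _ = ∑ i ∈ s, ∑ j ∈ s,
            ((if i < j then g i * g j else 0) + if j < i then g i * g j else 0) := by
            rw [← Finset.sum_add_distrib]
            exact Finset.sum_congr rfl fun i _ => (Finset.sum_add_distrib).symm
      _ = ∑ i ∈ s, ∑ j ∈ s, (g i * g j - if i = j then g i * g j else 0) := by
            refine Finset.sum_congr rfl fun i _ => Finset.sum_congr rfl fun j _ => ?_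
            rcases lt_trichotomy i j with hij | hij | hij
            · have ha : ¬ j < i := by omega
              have hb : ¬ i = j := by omega
              simp [hij, ha, hb]
            · simp [hij]
            · have ha : ¬ i < j := by omega
              have hb : ¬ i = j := by omega
              simp [hij, ha, hb]
      _ = ∑ i ∈ s, (g i * ∑ j ∈ s, g j - g i * g i) := by
            refine Finset.sum_congr rfl fun i hi => ?_
            rw [Finset.sum_sub_distrib, ← Finset.mul_sum, Finset.sum_ite_eq, if_pos hi]
      _ = (∑ i ∈ s, g i) ^ 2 - ∑ i ∈ s, g i ^ 2 := by
            rw [Finset.sum_sub_distrib, ← Finset.sum_mul, sq]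
            congr 1
            exact Finset.sum_congr rfl fun i _ => (sq (g i)).symm
  have hE2 : E = h * (2 * E) := by rw [← mul_assoc, mul_comm h 2, h2, one_mul]
  rw [hE2, key]

lemma cbmp_prod_expand (q h : R) (hq3 : q ^ 3 = 0) (h2 : 2 * h = 1) (g : ℕ → R)
    (s : Finset ℕ) :
    ∏ i ∈ s, (1 - q * g i)
      = 1 - q * ∑ i ∈ s, g i
        + q ^ 2 * (h * ((∑ i ∈ s, g i) ^ 2 - ∑ i ∈ s, g i ^ 2)) := by
  induction s using Finset.induction_on with
  | empty => simp
  | @insert a s ha ih =>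
    rw [Finset.prod_insert ha, ih, Finset.sum_insert ha, Finset.sum_insert ha]
    linear_combination (-(q ^ 2 * g a * ∑ i ∈ s, g i)) * h2
      + (-(g a * h * ((∑ i ∈ s, g i) ^ 2 - ∑ i ∈ s, g i ^ 2))) * hq3

lemma cbmp_prod_expand' (q h : R) (hq3 : q ^ 3 = 0) (h2 : 2 * h = 1) (g : ℕ → R)
    (s : Finset ℕ) :
    ∏ i ∈ s, (1 - q * g i)
      = 1 - q * ∑ i ∈ s, g i
        + q ^ 2 * ∑ i ∈ s, ∑ j ∈ s.filter (fun j => i < j), g i * g j := by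
  rw [cbmp_pair_sum s g h h2, cbmp_prod_expand q h hq3 h2 g s]

end

theorem central_binom_mod_p_cubed (p : ℕ) (hp : p.Prime) (hodd : Odd p) :
    (-1 : ZMod (p ^ 3)) ^ ((p - 1) / 2) * ((p - 1).choose ((p - 1) / 2) : ZMod (p ^ 3))
      = 1 - 2 * (p : ZMod (p ^ 3)) *
            (∑ i ∈ (Finset.Ioo 0 p).filter (fun i => Even i), ((i : ZMod (p ^ 3)))⁻¹)
          + 4 * (p : ZMod (p ^ 3)) ^ 2 *
            (∑ i ∈ (Finset.Ioo 0 p).filter (fun i => Even i),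
              ∑ j ∈ (Finset.Ioo i p).filter (fun j => Even j),
                ((i : ZMod (p ^ 3)) * (j : ZMod (p ^ 3)))⁻¹) := by
  have hp2 : 2 ≤ p := hp.two_le
  set m := (p - 1) / 2 with hm
  have hm2 : 2 * m + 1 = p := by obtain ⟨k, hk⟩ := hodd; omega
  set R := ZMod (p ^ 3) with hR
  -- units
  have hunit : ∀ i : ℕ, 0 < i → i < p → IsUnit ((i : R)) := by
    intro i h0 hi
    rw [ZMod.isUnit_iff_coprime]
    refine Nat.Coprime.pow_right 3 ?_
    refine Nat.coprime_comm.mp ((hp.coprime_iff_not_dvd).mpr ?_)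
    intro hd
    exact absurd (Nat.le_of_dvd h0 hd) (by omega)
  have h2u : IsUnit (2 : R) := by
    have := hunit 2 (by omega) (by omega)
    simpa using this
  have h2 : (2 : R) * (2 : R)⁻¹ = 1 := ZMod.mul_inv_of_unit _ h2u
  have hq3 : (p : R) ^ 3 = 0 := by
    have := ZMod.natCast_self (p ^ 3)
    push_cast at this
    exact this
  set t := (Finset.Ioo 0 p).filter (fun i => Even i) with ht
  set g : ℕ → R := fun i => 2 * ((i : ℕ) : R)⁻¹ with hg
  have htmem : ∀ i ∈ t, 0 < i ∧ i < p ∧ i % 2 = 0 := by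
    intro i hi
    simp only [ht, Finset.mem_filter, Finset.mem_Ioo, Nat.even_iff] at hi
    omega
  -- rewrite inner index sets
  have hinner : ∀ i : ℕ, (Finset.Ioo i p).filter (fun j => Even j)
      = t.filter (fun j => i < j) := by
    intro i
    ext j
    simp only [ht, Finset.mem_filter, Finset.mem_Ioo, Nat.even_iff]
    omega
  -- key product identity
  have ht_image : t = (Finset.range m).image (fun k => 2 * (k + 1)) := by
    ext i
    simp only [ht, Finset.mem_filter, Finset.mem_Ioo, Nat.even_iff, Finset.mem_image,
      Finset.mem_range]
    constructor
    · rintro ⟨⟨h0, hip⟩, he⟩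
      exact ⟨i / 2 - 1, by omega, by omega⟩
    · rintro ⟨k, hk, rfl⟩
      omega
  have hinj : ∀ x ∈ Finset.range m, ∀ y ∈ Finset.range m,
      2 * (x + 1) = 2 * (y + 1) → x = y := by intros; omega
  have P1 : ∏ i ∈ t, (1 - (p : R) * g i)
      = ∏ k ∈ Finset.range m, (1 - (p : R) * (((k + 1 : ℕ)) : R)⁻¹) := by
    rw [ht_image, Finset.prod_image hinj]
    refine Finset.prod_congr rfl fun k hk => ?_
    have hk' : k < m := Finset.mem_range.mp hk
    have hku : IsUnit (((k + 1 : ℕ)) : R) := hunit _ (by omega) (by omega)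
    have hc : ((2 * (k + 1) : ℕ) : R) = 2 * (((k + 1 : ℕ)) : R) := by rw [Nat.cast_mul, Nat.cast_ofNat]
    rw [hg]
    simp only
    rw [hc, cbmp_inv_mul_split h2u hku, ← mul_assoc 2, h2, one_mul]
  have hfact : (m.factorial : R) = ∏ k ∈ Finset.range m, (((k + 1 : ℕ)) : R) := by
    rw [← Finset.prod_range_add_one_eq_factorial, Nat.cast_prod]
  have P2 : (∏ k ∈ Finset.range m, (1 - (p : R) * (((k + 1 : ℕ)) : R)⁻¹)) * (m.factorial : R)
      = ∏ k ∈ Finset.range m, ((((k + 1 : ℕ)) : R) - p) := by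
    rw [hfact, ← Finset.prod_mul_distrib]
    refine Finset.prod_congr rfl fun k hk => ?_
    have hk' : k < m := Finset.mem_range.mp hk
    have hku : IsUnit (((k + 1 : ℕ)) : R) := hunit _ (by omega) (by omega)
    have hiv : (((k + 1 : ℕ)) : R)⁻¹ * (((k + 1 : ℕ)) : R) = 1 := ZMod.inv_mul_of_unit _ hku
    linear_combination (-(p : R)) * hiv
  have P3 : (-1 : R) ^ m * ∏ k ∈ Finset.range m, ((p : R) - (((k + 1 : ℕ)) : R))
      = ∏ k ∈ Finset.range m, ((((k + 1 : ℕ)) : R) - p) := by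
    rw [show ((-1 : R) ^ m) = ∏ _k ∈ Finset.range m, (-1 : R) by simp,
      ← Finset.prod_mul_distrib]
    exact Finset.prod_congr rfl fun k _ => by ring
  have P4 : ∏ k ∈ Finset.range m, ((p : R) - (((k + 1 : ℕ)) : R))
      = (((p - 1).descFactorial m : ℕ) : R) := by
    rw [Nat.descFactorial_eq_prod_range, Nat.cast_prod]
    refine Finset.prod_congr rfl fun k hk => ?_
    have hk' : k < m := Finset.mem_range.mp hk
    have he : p - 1 - k = p - (k + 1) := by omega
    rw [he, Nat.cast_sub (by omega : k + 1 ≤ p)]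
  have P5 : (((p - 1).descFactorial m : ℕ) : R) = (m.factorial : R) * ((p - 1).choose m : R) := by
    rw [Nat.descFactorial_eq_factorial_mul_choose]
    rw [Nat.cast_mul]
  have hmfu : IsUnit (m.factorial : R) := by
    rw [ZMod.isUnit_iff_coprime]
    refine Nat.Coprime.pow_right 3 ?_
    refine Nat.coprime_comm.mp ((hp.coprime_iff_not_dvd).mpr ?_)
    intro hd
    have := (Nat.Prime.dvd_factorial hp).mp hd
    omega
  have hmain : (-1 : R) ^ m * ((p - 1).choose m : R) = ∏ i ∈ t, (1 - (p : R) * g i) := by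
    refine hmfu.mul_right_cancel ?_
    calc (-1 : R) ^ m * ((p - 1).choose m : R) * (m.factorial : R)
        = (-1 : R) ^ m * (((p - 1).descFactorial m : ℕ) : R) := by rw [P5]; ring
      _ = (-1 : R) ^ m * ∏ k ∈ Finset.range m, ((p : R) - (((k + 1 : ℕ)) : R)) := by rw [P4]
      _ = ∏ k ∈ Finset.range m, ((((k + 1 : ℕ)) : R) - p) := P3
      _ = (∏ k ∈ Finset.range m, (1 - (p : R) * (((k + 1 : ℕ)) : R)⁻¹)) * (m.factorial : R) :=
          P2.symm
      _ = (∏ i ∈ t, (1 - (p : R) * g i)) * (m.factorial : R) := by rw [P1]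
  -- rewrite the RHS double sum
  have hdouble : ∑ i ∈ t, ∑ j ∈ (Finset.Ioo i p).filter (fun j => Even j),
        ((i : R) * (j : R))⁻¹
      = ∑ i ∈ t, ∑ j ∈ t.filter (fun j => i < j), (i : R)⁻¹ * (j : R)⁻¹ := by
    refine Finset.sum_congr rfl fun i hi => ?_
    rw [hinner i]
    refine Finset.sum_congr rfl fun j hj => ?_
    have hj' := htmem j (Finset.mem_filter.mp hj).1
    have hi' := htmem i hi
    exact cbmp_inv_mul_split (hunit i hi'.1 hi'.2.1) (hunit j hj'.1 hj'.2.1)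
  rw [hdouble, hmain, cbmp_prod_expand' (p : R) (2 : R)⁻¹ hq3 h2 g t]
  have e1 : ∑ i ∈ t, g i = 2 * ∑ i ∈ t, ((i : ℕ) : R)⁻¹ := by
    rw [Finset.mul_sum]
  have e2 : ∑ i ∈ t, ∑ j ∈ t.filter (fun j => i < j), g i * g j
      = 4 * ∑ i ∈ t, ∑ j ∈ t.filter (fun j => i < j), (i : R)⁻¹ * (j : R)⁻¹ := by
    rw [Finset.mul_sum]
    refine Finset.sum_congr rfl fun i _ => ?_
    rw [Finset.mul_sum]
    exact Finset.sum_congr rfl fun j _ => by rw [hg]; ring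
  rw [e1, e2]
  ring
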